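/- The Artin–Hasse map E, sending a Witt vector a = (a_i) over a ℤ_(p)-algebra A to the product E(a) = Π_{i≥0} AH(a_i x^{p^i}) in the group 1 + x·A[[x]], is a group homomorphism from the additive group of W(A) to the multiplicative group Λ(A) = 1 + x·A[[x]]; equivalently E(a) = exp(Σ_{n≥0} fant_n(a) p^{-n} x^{p^n}), and it satisfies E(a + b) = E(a)·E(b) and E(V(a)) = E(a) ∘ x^p. -/

import Mathlib

open PowerSeries

/-- Formal composition `f ∘ g` of power series (valid when `g` has zero constant term):
the `k`-th coefficient is that of `∑_{j ≤ k} f_j g^j`. -/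
noncomputable def psComp {R : Type*} [CommRing R] (f g : PowerSeries R) : PowerSeries R :=
  PowerSeries.mk fun k =>
    PowerSeries.coeff (R := R) k (∑ j ∈ Finset.range (k + 1), PowerSeries.C (R := R) (PowerSeries.coeff (R := R) j f) * g ^ j)

/-- The ring `ℤ_(p) = ℤ_p ∩ ℚ`, realized as a subring of `ℚ`. -/
noncomputable def ZpRat (p : ℕ) [Fact p.Prime] : Subring ℚ :=
  (PadicInt.subring p).comap (Rat.castHom ℚ_[p])

open scoped Classical

/-- The series `∑_{n ≥ 0} x^{pⁿ}/pⁿ` over `ℚ` (its coefficient at `k = pⁿ` is `1/k`). -/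
noncomputable def ahLog (p : ℕ) : PowerSeries ℚ :=
  PowerSeries.mk fun k => if ∃ n : ℕ, k = p ^ n then (1 : ℚ) / k else 0

/-- The Artin–Hasse exponential of a Witt vector `a` over a `ℤ_(p)`-algebra `A`:
`E(a) = ∏_{i ≥ 0} AH(aᵢ x^{pⁱ})`.  (The `k`-th coefficient of the infinite product is
that of the finite product of the factors with `i ≤ k`, the remaining factors being
`≡ 1 mod x^{k+1}`.) -/
noncomputable def artinHasseExp {p : ℕ} [Fact p.Prime] {A : Type*} [CommRing A]
    [Algebra (ZpRat p) A] (AH : PowerSeries (ZpRat p)) (a : WittVector p A) :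
    PowerSeries A :=
  PowerSeries.mk fun k => PowerSeries.coeff (R := A) k
    (∏ i ∈ Finset.range (k + 1),
      psComp (PowerSeries.map (algebraMap (ZpRat p) A) AH)
        (PowerSeries.C (R := A) (a.coeff i) * PowerSeries.X ^ p ^ i))

/-! ### Auxiliary lemmas on `psComp` -/

section PsCompLemmas

variable {R : Type*} [CommRing R]

theorem AH_coeff_pow_eq_zero {g : PowerSeries R} (hg : constantCoeff (R := R) g = 0)
    {k j : ℕ} (hkj : k < j) : coeff (R := R) k (g ^ j) = 0 := by
  have h1 : (X : R⟦X⟧) ∣ g := X_dvd_iff.2 hg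
  exact (X_pow_dvd_iff.1 (pow_dvd_pow_of_dvd h1 j)) k hkj

theorem coeff_psComp (f g : PowerSeries R) (k : ℕ) :
    coeff (R := R) k (psComp f g) =
      coeff (R := R) k (∑ j ∈ Finset.range (k + 1), C (R := R) (coeff (R := R) j f) * g ^ j) := by
  simp [psComp]

theorem coeff_psComp_stable {g : PowerSeries R} (hg : constantCoeff (R := R) g = 0)
    (f : PowerSeries R) {k N : ℕ} (hN : k < N) :
    coeff (R := R) k (psComp f g) =
      coeff (R := R) k (∑ j ∈ Finset.range N, C (R := R) (coeff (R := R) j f) * g ^ j) := by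
  rw [coeff_psComp, map_sum, map_sum]
  apply Finset.sum_subset (Finset.range_subset_range.2 hN)
  intro j hj hj'
  simp only [Finset.mem_range, not_lt] at hj'
  rw [coeff_C_mul, AH_coeff_pow_eq_zero hg (by omega), mul_zero]

/-- the triangle = biUnion of antidiagonals -/
theorem AH_range_biUnion_antidiagonal (k : ℕ) :
    (Finset.range (k+1)).biUnion Finset.HasAntidiagonal.antidiagonal
      = (Finset.range (k+1) ×ˢ Finset.range (k+1)).filter (fun q => q.1 + q.2 ≤ k) := by
  ext ⟨u, v⟩
  simp only [Finset.mem_biUnion, Finset.mem_range, Finset.HasAntidiagonal.mem_antidiagonal,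
    Finset.mem_filter, Finset.mem_product]
  constructor
  · rintro ⟨j, hj, h⟩; omega
  · intro h; exact ⟨u + v, by omega, rfl⟩

/-- Core combinatorial lemma. -/
theorem AH_core {f g : PowerSeries R} (hf : constantCoeff (R := R) f = 0) (hg : constantCoeff (R := R) g = 0)
    (c d : ℕ → R) (k : ℕ) :
    ∑ j ∈ Finset.range (k+1), ∑ q ∈ Finset.HasAntidiagonal.antidiagonal j,
        c q.1 * d q.2 * coeff (R := R) k (f ^ q.1 * g ^ q.2)
      = coeff (R := R) k ((∑ u ∈ Finset.range (k+1), C (R := R) (c u) * f ^ u) *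
          (∑ v ∈ Finset.range (k+1), C (R := R) (d v) * g ^ v)) := by
  rw [Finset.sum_mul_sum]
  rw [← Finset.sum_product']
  rw [map_sum]
  have hvan : ∀ q : ℕ × ℕ, k < q.1 + q.2 → coeff (R := R) k (f ^ q.1 * g ^ q.2) = 0 := by
    intro q hq
    have h1 : (X : R⟦X⟧) ^ (q.1 + q.2) ∣ f ^ q.1 * g ^ q.2 := by
      rw [pow_add]
      exact mul_dvd_mul (pow_dvd_pow_of_dvd (X_dvd_iff.2 hf) _)
        (pow_dvd_pow_of_dvd (X_dvd_iff.2 hg) _)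
    exact (X_pow_dvd_iff.1 h1) k hq
  rw [← Finset.sum_biUnion ?hdisj, AH_range_biUnion_antidiagonal]
  case hdisj =>
    intro j1 _ j2 _ hne
    simp only [Function.onFun]
    rw [Finset.disjoint_left]
    intro q h1 h2
    rw [Finset.HasAntidiagonal.mem_antidiagonal] at h1 h2
    exact hne (h1 ▸ h2)
  have hterm : ∀ q : ℕ × ℕ,
      coeff (R := R) k (C (R := R) (c q.1) * f ^ q.1 * (C (R := R) (d q.2) * g ^ q.2))
        = c q.1 * d q.2 * coeff (R := R) k (f ^ q.1 * g ^ q.2) := by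
    intro q
    rw [show C (R := R) (c q.1) * f ^ q.1 * (C (R := R) (d q.2) * g ^ q.2)
        = C (R := R) (c q.1) * (C (R := R) (d q.2) * (f ^ q.1 * g ^ q.2)) by ring,
      coeff_C_mul, coeff_C_mul, ← mul_assoc]
  rw [Finset.sum_congr rfl (fun q _ => hterm q)]
  apply Finset.sum_subset (Finset.filter_subset _ _)
  intro q hq hq'
  rw [Finset.mem_filter] at hq'
  have : ¬ q.1 + q.2 ≤ k := fun h => hq' ⟨hq, h⟩
  rw [hvan q (by omega), mul_zero]

theorem psComp_mul {g : PowerSeries R} (hg : constantCoeff (R := R) g = 0) (f₁ f₂ : PowerSeries R) :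
    psComp (f₁ * f₂) g = psComp f₁ g * psComp f₂ g := by
  ext k
  rw [coeff_mul]
  have hco : ∀ q ∈ Finset.HasAntidiagonal.antidiagonal k,
      coeff (R := R) q.1 (psComp f₁ g) * coeff (R := R) q.2 (psComp f₂ g)
        = coeff (R := R) q.1 (∑ u ∈ Finset.range (k+1), C (R := R) (coeff (R := R) u f₁) * g ^ u)
          * coeff (R := R) q.2 (∑ v ∈ Finset.range (k+1), C (R := R) (coeff (R := R) v f₂) * g ^ v) := by
    intro q hq
    rw [Finset.HasAntidiagonal.mem_antidiagonal] at hq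
    rw [coeff_psComp_stable (N := k+1) hg f₁ (by omega),
      coeff_psComp_stable (N := k+1) hg f₂ (by omega)]
  rw [Finset.sum_congr rfl hco, ← coeff_mul, ← AH_core hg hg, coeff_psComp, map_sum]
  apply Finset.sum_congr rfl
  intro j hj
  rw [coeff_C_mul, coeff_mul, Finset.sum_mul]
  apply Finset.sum_congr rfl
  intro q hq
  rw [Finset.HasAntidiagonal.mem_antidiagonal] at hq
  rw [← hq, pow_add]

theorem psComp_one (g : PowerSeries R) : psComp 1 g = 1 := by
  ext k
  rw [coeff_psComp, map_sum, Finset.sum_eq_single 0 ?h1 ?h2]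
  · simp
  case h1 => intro j _ hj0; rw [PowerSeries.coeff_one, if_neg hj0, map_zero, zero_mul, map_zero]
  case h2 => intro h; exact absurd (Finset.mem_range.2 (Nat.succ_pos k)) h

theorem coeff_psComp_monomial (f : PowerSeries R) (c : R) {m : ℕ} (hm : 1 ≤ m) (k : ℕ) :
    coeff (R := R) k (psComp f (C (R := R) c * X ^ m)) =
      if m ∣ k then coeff (R := R) (k / m) f * c ^ (k / m) else 0 := by
  rw [coeff_psComp, map_sum]
  have hterm : ∀ j, coeff (R := R) k (C (R := R) (coeff (R := R) j f) * (C (R := R) c * X ^ m) ^ j)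
      = if k = m * j then coeff (R := R) j f * c ^ j else 0 := by
    intro j
    rw [mul_pow, ← map_pow, ← pow_mul, ← mul_assoc, ← map_mul, coeff_C_mul, coeff_X_pow]
    split_ifs with h
    · rw [mul_one]
    · rw [mul_zero]
  rw [Finset.sum_congr rfl (fun j _ => hterm j)]
  by_cases hd : m ∣ k
  · rw [if_pos hd, Finset.sum_eq_single_of_mem (k / m)
      (Finset.mem_range.2 (by have := Nat.div_le_self k m; omega))]
    · rw [if_pos (Nat.mul_div_cancel' hd).symm]
    · intro j _ hj
      rw [if_neg]
      intro h
      exact hj (by subst h; rw [Nat.mul_div_cancel_left _ (by omega)])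
  · rw [if_neg hd]
    apply Finset.sum_eq_zero
    intro j _
    rw [if_neg]
    intro h
    exact hd ⟨j, h⟩

theorem psComp_C {m : ℕ} (hm : 1 ≤ m) (r c : R) :
    psComp (C (R := R) r) (C (R := R) c * X ^ m) = C (R := R) r := by
  ext k
  rw [coeff_psComp_monomial _ _ hm]
  by_cases hk : k = 0
  · subst hk
    simp
  · have h0 : (coeff (R := R) k) ((C (R := R)) r) = 0 := by rw [PowerSeries.coeff_C, if_neg hk]
    rw [h0]
    by_cases hd : m ∣ k
    · rw [if_pos hd, PowerSeries.coeff_C, if_neg, zero_mul]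
      have h1 : m ≤ k := Nat.le_of_dvd (by omega) hd
      have := Nat.div_pos h1 (by omega)
      omega
    · rw [if_neg hd]

theorem psComp_add_f (f₁ f₂ g : PowerSeries R) :
    psComp (f₁ + f₂) g = psComp f₁ g + psComp f₂ g := by
  ext k
  rw [map_add, coeff_psComp, coeff_psComp, coeff_psComp, ← map_add, ← Finset.sum_add_distrib]
  congr 1
  apply Finset.sum_congr rfl
  intro j _
  rw [map_add, map_add, add_mul]

theorem psComp_sum_f {ι : Type*} (s : Finset ι) (F : ι → PowerSeries R) (g : PowerSeries R) :
    psComp (∑ i ∈ s, F i) g = ∑ i ∈ s, psComp (F i) g := by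
  classical
  induction s using Finset.induction_on with
  | empty =>
    ext k
    rw [coeff_psComp]
    simp
  | @insert _ _ hnot ih =>
    rw [Finset.sum_insert hnot, Finset.sum_insert hnot, psComp_add_f, ih]

theorem psComp_pow {g : PowerSeries R} (hg : constantCoeff (R := R) g = 0) (L : PowerSeries R) (j : ℕ) :
    psComp (L ^ j) g = (psComp L g) ^ j := by
  induction j with
  | zero => simpa using psComp_one g
  | succ n ih => rw [pow_succ, psComp_mul hg, ih, pow_succ]

theorem AH_constantCoeff_monomial {m : ℕ} (hm : 1 ≤ m) (c : R) :
    constantCoeff (R := R) (C (R := R) c * X ^ m) = 0 := by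
  have h : constantCoeff (R := R) ((X : R⟦X⟧) ^ m) = 0 := by
    rw [← coeff_zero_eq_constantCoeff_apply, coeff_X_pow, if_neg (by omega)]
  rw [map_mul, h, mul_zero]

/-- associativity against a monomial -/
theorem psComp_assoc_monomial {L : PowerSeries R} (hL : constantCoeff (R := R) L = 0)
    {m : ℕ} (hm : 1 ≤ m) (c : R) (f : PowerSeries R) :
    psComp (psComp f L) (C (R := R) c * X ^ m) = psComp f (psComp L (C (R := R) c * X ^ m)) := by
  have hmono := AH_constantCoeff_monomial hm c
  ext k
  have hrhs : ∑ j ∈ Finset.range (k+1), C (R := R) (coeff (R := R) j f) * (psComp L (C (R := R) c * X ^ m)) ^ j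
      = psComp (∑ j ∈ Finset.range (k+1), C (R := R) (coeff (R := R) j f) * L ^ j) (C (R := R) c * X ^ m) := by
    rw [psComp_sum_f]
    apply Finset.sum_congr rfl
    intro j _
    rw [psComp_mul hmono, psComp_C hm, psComp_pow hmono]
  rw [coeff_psComp (g := psComp L (C (R := R) c * X ^ m)), hrhs, coeff_psComp_monomial _ _ hm,
    coeff_psComp_monomial _ _ hm]
  by_cases hd : m ∣ k
  · rw [if_pos hd, if_pos hd,
      coeff_psComp_stable hL f (show k/m < k+1 by have := Nat.div_le_self k m; omega)]
  · rw [if_neg hd, if_neg hd]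

theorem AH_coeff_pow_congr {g g' : PowerSeries R} {k : ℕ}
    (h : ∀ m ≤ k, coeff (R := R) m g = coeff (R := R) m g') (j : ℕ) :
    ∀ m ≤ k, coeff (R := R) m (g ^ j) = coeff (R := R) m (g' ^ j) := by
  induction j with
  | zero => intro m _; rfl
  | succ n ih =>
    intro m hm
    rw [pow_succ, pow_succ, coeff_mul, coeff_mul]
    apply Finset.sum_congr rfl
    intro q hq
    rw [Finset.HasAntidiagonal.mem_antidiagonal] at hq
    rw [ih q.1 (by omega), h q.2 (by omega)]

theorem coeff_psComp_congr {g g' : PowerSeries R} {k : ℕ}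
    (h : ∀ m ≤ k, coeff (R := R) m g = coeff (R := R) m g') (f : PowerSeries R) :
    coeff (R := R) k (psComp f g) = coeff (R := R) k (psComp f g') := by
  rw [coeff_psComp, coeff_psComp, map_sum, map_sum]
  apply Finset.sum_congr rfl
  intro j _
  rw [coeff_C_mul, coeff_C_mul, AH_coeff_pow_congr h j k le_rfl]

theorem AH_map_psComp {S : Type*} [CommRing S] (φ : R →+* S) (f g : PowerSeries R) :
    PowerSeries.map φ (psComp f g) = psComp (PowerSeries.map φ f) (PowerSeries.map φ g) := by
  ext k
  rw [PowerSeries.coeff_map, coeff_psComp, coeff_psComp, map_sum, map_sum, map_sum]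
  apply Finset.sum_congr rfl
  intro j _
  rw [coeff_C_mul, map_mul, coeff_C_mul, PowerSeries.coeff_map, ← map_pow,
    PowerSeries.coeff_map]

theorem AH_ps_map_map {S T : Type*} [CommRing S] [CommRing T] (f : R →+* S) (g : S →+* T)
    (φ : PowerSeries R) :
    PowerSeries.map g (PowerSeries.map f φ) = PowerSeries.map (g.comp f) φ := by
  ext k
  simp [PowerSeries.coeff_map]

theorem AH_ps_map_injective {S : Type*} [CommRing S] {f : R →+* S}
    (hf : Function.Injective f) : Function.Injective (PowerSeries.map f) := by
  intro φ ψ h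
  ext n
  apply hf
  rw [← PowerSeries.coeff_map, ← PowerSeries.coeff_map, h]

theorem coeff_zero_psComp (f g : PowerSeries R) :
    coeff (R := R) 0 (psComp f g) = coeff (R := R) 0 f := by
  rw [coeff_psComp]
  simp

end PsCompLemmas

section ExpLemma
variable {B : Type*} [CommRing B] [Algebra ℚ B]

theorem psComp_exp_add {f g : PowerSeries B} (hf : constantCoeff (R := B) f = 0)
    (hg : constantCoeff (R := B) g = 0) :
    psComp (PowerSeries.exp B) (f + g)
      = psComp (PowerSeries.exp B) f * psComp (PowerSeries.exp B) g := by
  ext k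
  have hrhs : coeff (R := B) k (psComp (exp B) f * psComp (exp B) g)
      = ∑ j ∈ Finset.range (k+1), ∑ q ∈ Finset.HasAntidiagonal.antidiagonal j,
          (algebraMap ℚ B (1 / q.1.factorial)) * (algebraMap ℚ B (1 / q.2.factorial))
            * coeff (R := B) k (f ^ q.1 * g ^ q.2) := by
    rw [coeff_mul]
    have hco : ∀ q ∈ Finset.HasAntidiagonal.antidiagonal k,
        coeff (R := B) q.1 (psComp (exp B) f) * coeff (R := B) q.2 (psComp (exp B) g)
          = coeff (R := B) q.1 (∑ u ∈ Finset.range (k+1),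
              C (R := B) (algebraMap ℚ B (1/u.factorial)) * f ^ u)
            * coeff (R := B) q.2 (∑ v ∈ Finset.range (k+1),
              C (R := B) (algebraMap ℚ B (1/v.factorial)) * g ^ v) := by
      intro q hq
      rw [Finset.HasAntidiagonal.mem_antidiagonal] at hq
      rw [coeff_psComp_stable (N := k+1) hf _ (by omega),
        coeff_psComp_stable (N := k+1) hg _ (by omega)]
      simp only [PowerSeries.coeff_exp]
    rw [Finset.sum_congr rfl hco, ← coeff_mul,
      ← AH_core hf hg (fun u => algebraMap ℚ B (1/u.factorial))
        (fun v => algebraMap ℚ B (1/v.factorial)) k]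
  rw [hrhs, coeff_psComp, map_sum]
  apply Finset.sum_congr rfl
  intro j hj
  rw [coeff_C_mul, PowerSeries.coeff_exp, add_pow, map_sum, Finset.mul_sum,
    Finset.Nat.sum_antidiagonal_eq_sum_range_succ_mk
      (f := fun q : ℕ × ℕ => (algebraMap ℚ B (1 / q.1.factorial))
        * (algebraMap ℚ B (1 / q.2.factorial)) * coeff (R := B) k (f ^ q.1 * g ^ q.2))]
  apply Finset.sum_congr rfl
  intro u hu
  rw [Finset.mem_range] at hu
  have hule : u ≤ j := by omega
  rw [← map_natCast (C (R := B)) (j.choose u), PowerSeries.coeff_mul_C]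
  have hQ : (1/(j.factorial):ℚ) * (j.choose u : ℚ) = (1/u.factorial) * (1/(j-u).factorial) := by
    have h := Nat.choose_mul_factorial_mul_factorial hule
    have h9 : (j.choose u : ℚ) * u.factorial * (j-u).factorial = j.factorial := by
      exact_mod_cast congrArg (Nat.cast : ℕ → ℚ) h
    have hu0 : (u.factorial:ℚ) ≠ 0 := Nat.cast_ne_zero.2 (Nat.factorial_ne_zero u)
    have hl0 : ((j-u).factorial:ℚ) ≠ 0 := Nat.cast_ne_zero.2 (Nat.factorial_ne_zero _)
    have hj0 : (j.factorial:ℚ) ≠ 0 := Nat.cast_ne_zero.2 (Nat.factorial_ne_zero j)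
    field_simp
    linear_combination h9
  have hfact : (algebraMap ℚ B (1/j.factorial)) * ((j.choose u : B))
      = (algebraMap ℚ B (1/u.factorial)) * (algebraMap ℚ B (1/(j-u).factorial)) := by
    rw [← map_natCast (algebraMap ℚ B) (j.choose u), ← map_mul, ← map_mul, hQ]
  calc algebraMap ℚ B (1/j.factorial) * (coeff (R := B) k (f ^ u * g ^ (j-u)) * (j.choose u : B))
      = (algebraMap ℚ B (1/j.factorial) * (j.choose u : B)) * coeff (R := B) k (f ^ u * g ^ (j-u)) := by
        ring
    _ = _ := by rw [hfact]

theorem psComp_exp_zero : psComp (PowerSeries.exp B) 0 = 1 := by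
  ext k
  rw [coeff_psComp, map_sum, Finset.sum_eq_single 0 ?h1 ?h2]
  · simp
  case h1 =>
    intro j _ hj0
    rw [zero_pow hj0, mul_zero, map_zero]
  case h2 => intro h; exact absurd (Finset.mem_range.2 (Nat.succ_pos k)) h

theorem psComp_exp_prod {ι : Type*} (s : Finset ι) (L : ι → PowerSeries B)
    (hL : ∀ i ∈ s, constantCoeff (R := B) (L i) = 0) :
    ∏ i ∈ s, psComp (PowerSeries.exp B) (L i)
      = psComp (PowerSeries.exp B) (∑ i ∈ s, L i) := by
  classical
  induction s using Finset.induction_on with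
  | empty => rw [Finset.prod_empty, Finset.sum_empty, psComp_exp_zero]
  | @insert a s hnot ih =>
    rw [Finset.prod_insert hnot, Finset.sum_insert hnot,
      psComp_exp_add (hL a (Finset.mem_insert_self a s))
        (by rw [map_sum]; exact Finset.sum_eq_zero fun i hi => hL i (Finset.mem_insert_of_mem hi)),
      ih (fun i hi => hL i (Finset.mem_insert_of_mem hi))]

end ExpLemma

/-! ### The ghost series and the exponential formula -/

section Ghost

variable (p : ℕ) [Fact p.Prime] {B : Type*} [CommRing B] [Algebra ℚ B]

/-- `∑_n ghost_n(x) p^{-n} x^{p^n}` over a `ℚ`-algebra. -/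
noncomputable def ghS (x : WittVector p B) : PowerSeries B :=
  PowerSeries.mk fun k => if ∃ n : ℕ, k = p ^ n then
    algebraMap ℚ B (1 / (k : ℚ)) * WittVector.ghostComponent (Nat.log p k) x else 0

variable {p}

theorem coeff_ghS_pow (x : WittVector p B) (n : ℕ) :
    coeff (R := B) (p ^ n) (ghS p x)
      = algebraMap ℚ B (1 / ((p ^ n : ℕ) : ℚ)) * WittVector.ghostComponent n x := by
  have hp2 : 1 < p := (Fact.out : p.Prime).one_lt
  rw [ghS, coeff_mk, if_pos ⟨n, rfl⟩, Nat.log_pow hp2]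

theorem coeff_ghS_not_pow (x : WittVector p B) {k : ℕ} (hk : ¬ ∃ n : ℕ, k = p ^ n) :
    coeff (R := B) k (ghS p x) = 0 := by
  rw [ghS, coeff_mk, if_neg hk]

theorem constantCoeff_ghS (x : WittVector p B) : constantCoeff (R := B) (ghS p x) = 0 := by
  rw [← coeff_zero_eq_constantCoeff_apply]
  apply coeff_ghS_not_pow
  rintro ⟨n, hn⟩
  have := pow_pos (show 0 < p by have := (Fact.out : p.Prime).one_lt; omega) n
  omega

theorem ghS_add (x y : WittVector p B) : ghS p (x + y) = ghS p x + ghS p y := by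
  ext k
  rw [map_add]
  simp only [ghS, coeff_mk]
  split_ifs with h
  · rw [map_add, mul_add]
  · rw [add_zero]

theorem ghS_verschiebung (x : WittVector p B) :
    ghS p (WittVector.verschiebung x) = psComp (ghS p x) (C (R := B) 1 * X ^ p) := by
  have hp2 : 1 < p := (Fact.out : p.Prime).one_lt
  ext k
  rw [coeff_psComp_monomial _ _ (show 1 ≤ p by omega)]
  by_cases hk : ∃ n : ℕ, k = p ^ n
  · obtain ⟨n, rfl⟩ := hk
    rw [coeff_ghS_pow]
    cases n with
    | zero =>
      rw [pow_zero, WittVector.ghostComponent_zero_verschiebung, mul_zero, if_neg]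
      intro h
      have := Nat.le_of_dvd (by omega) h
      omega
    | succ m =>
      have hdvd : p ∣ p ^ (m + 1) := dvd_pow_self p (Nat.succ_ne_zero m)
      rw [if_pos hdvd, one_pow, mul_one]
      have hquot : p ^ (m + 1) / p = p ^ m := by
        rw [pow_succ, Nat.mul_div_cancel _ (by omega)]
      rw [hquot, coeff_ghS_pow, WittVector.ghostComponent_verschiebung]
      rw [show ((p : B)) = algebraMap ℚ B ((p : ℚ)) by rw [map_natCast]]
      rw [← mul_assoc, ← map_mul]
      congr 2
      have hpne : (p : ℚ) ≠ 0 := by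
        have : 0 < p := by omega
        exact_mod_cast this.ne'
      push_cast
      rw [div_mul_eq_mul_div, one_mul, pow_succ, eq_div_iff (by positivity)]
      field_simp
  · rw [coeff_ghS_not_pow _ hk]
    by_cases hd : p ∣ k
    · rw [if_pos hd]
      have : ¬ ∃ t : ℕ, k / p = p ^ t := by
        rintro ⟨t, ht⟩
        rcases Nat.eq_zero_or_pos k with rfl | hkpos
        · rw [Nat.zero_div] at ht
          have := pow_pos (show 0 < p by omega) t
          omega
        · apply hk
          refine ⟨t + 1, ?_⟩
          rw [pow_succ']
          rw [← ht, Nat.mul_div_cancel' hd]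
      rw [coeff_ghS_not_pow _ this, zero_mul]
    · rw [if_neg hd]

end Ghost

/-! ### Naturality of the Artin–Hasse map and the exponential formula -/

section Main

variable {p : ℕ} [Fact p.Prime]

theorem AHE_map {A A' : Type*} [CommRing A] [CommRing A']
    [Algebra (ZpRat p) A] [Algebra (ZpRat p) A'] (AH : PowerSeries (ZpRat p))
    (f : A →+* A') (hf : f.comp (algebraMap (ZpRat p) A) = algebraMap (ZpRat p) A')
    (x : WittVector p A) :
    PowerSeries.map f (artinHasseExp AH x) = artinHasseExp AH (WittVector.map f x) := by
  ext k
  rw [PowerSeries.coeff_map]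
  simp only [artinHasseExp, coeff_mk]
  rw [← PowerSeries.coeff_map, map_prod]
  congr 1
  apply Finset.prod_congr rfl
  intro i _
  rw [AH_map_psComp, AH_ps_map_map, hf, map_mul, PowerSeries.map_C, map_pow,
    PowerSeries.map_X, WittVector.map_coeff]

theorem AHE_eq_exp {B : Type*} [CommRing B] [Algebra ℚ B] [Algebra (ZpRat p) B]
    (halg : (algebraMap (ZpRat p) B) = (algebraMap ℚ B).comp (ZpRat p).subtype)
    {AH : PowerSeries (ZpRat p)}
    (hAH : PowerSeries.map (ZpRat p).subtype AH = psComp (PowerSeries.exp ℚ) (ahLog p))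
    (x : WittVector p B) :
    artinHasseExp AH x = psComp (PowerSeries.exp B) (ghS p x) := by
  have hp2 : 1 < p := (Fact.out : p.Prime).one_lt
  set LQ := PowerSeries.map (algebraMap ℚ B) (ahLog p) with hLQdef
  have hcoeffLQ : ∀ t : ℕ, coeff (R := B) t LQ
      = algebraMap ℚ B (if ∃ n : ℕ, t = p ^ n then (1 : ℚ) / t else 0) := by
    intro t
    rw [hLQdef, PowerSeries.coeff_map, ahLog, coeff_mk]
  have hLQ0 : constantCoeff (R := B) LQ = 0 := by
    rw [← coeff_zero_eq_constantCoeff_apply, hcoeffLQ, if_neg, map_zero]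
    rintro ⟨n, hn⟩
    have := pow_pos (show 0 < p by omega) n
    omega
  have hAHB : PowerSeries.map (algebraMap (ZpRat p) B) AH = psComp (PowerSeries.exp B) LQ := by
    rw [halg, ← AH_ps_map_map, hAH, AH_map_psComp, PowerSeries.map_exp]
  set Li := fun i : ℕ => psComp LQ (C (R := B) (x.coeff i) * X ^ p ^ i) with hLidef
  have honele : ∀ i : ℕ, 1 ≤ p ^ i := fun i => Nat.one_le_pow _ _ (by omega)
  have hLi0 : ∀ i, constantCoeff (R := B) (Li i) = 0 := by
    intro i
    rw [hLidef, ← coeff_zero_eq_constantCoeff_apply,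
      coeff_psComp_monomial _ _ (honele i), if_pos (dvd_zero _), Nat.zero_div,
      coeff_zero_eq_constantCoeff_apply, hLQ0, zero_mul]
  ext k
  simp only [artinHasseExp, coeff_mk]
  rw [hAHB,
    Finset.prod_congr rfl (fun i (_ : i ∈ Finset.range (k+1)) =>
      psComp_assoc_monomial hLQ0 (honele i) (x.coeff i) (PowerSeries.exp B)),
    psComp_exp_prod _ _ (fun i _ => hLi0 i)]
  apply coeff_psComp_congr
  intro m hm
  rw [map_sum]
  have hcoeffLi : ∀ i, coeff (R := B) m (Li i)
      = if p ^ i ∣ m then (coeff (R := B) (m / p ^ i) LQ) * (x.coeff i) ^ (m / p ^ i) else 0 :=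
    fun i => coeff_psComp_monomial _ _ (honele i) m
  by_cases hm' : ∃ n : ℕ, m = p ^ n
  · obtain ⟨n, rfl⟩ := hm'
    rw [coeff_ghS_pow, WittVector.ghostComponent_apply, aeval_wittPolynomial, Finset.mul_sum]
    have hnk : n + 1 ≤ k + 1 := by
      have := Nat.lt_pow_self (n := n) hp2
      omega
    rw [Finset.sum_congr rfl (fun i (_ : i ∈ Finset.range (k+1)) => hcoeffLi i)]
    rw [← Finset.sum_subset (Finset.range_subset_range.2 hnk) ?hvan]
    case hvan =>
      intro i hik hin
      rw [Finset.mem_range] at hik hin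
      rw [if_neg]
      intro hdvd
      have h1 : p ^ i ≤ p ^ n := Nat.le_of_dvd (pow_pos (by omega) n) hdvd
      have h2 : p ^ n < p ^ i := Nat.pow_lt_pow_right hp2 (by omega)
      omega
    apply Finset.sum_congr rfl
    intro i hi
    rw [Finset.mem_range] at hi
    have hin : i ≤ n := by omega
    have hdvd : p ^ i ∣ p ^ n := pow_dvd_pow p hin
    have hquot : p ^ n / p ^ i = p ^ (n - i) := Nat.pow_div hin (by omega)
    rw [if_pos hdvd, hquot, hcoeffLQ, if_pos ⟨n - i, rfl⟩]
    rw [show ((p : B) ^ i) = algebraMap ℚ B ((p : ℚ) ^ i) by rw [map_pow, map_natCast]]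
    rw [← mul_assoc, ← map_mul]
    congr 2
    have hpne : (p : ℚ) ≠ 0 := by
      have : 0 < p := by omega
      exact_mod_cast this.ne'
    have hsplit : (p : ℚ) ^ n = (p : ℚ) ^ (n - i) * (p : ℚ) ^ i := by
      rw [← pow_add]
      congr 1
      omega
    push_cast
    rw [hsplit]
    field_simp
  · rw [coeff_ghS_not_pow _ hm']
    apply Finset.sum_eq_zero
    intro i _
    rw [hcoeffLi i]
    split_ifs with hd
    · rw [hcoeffLQ, if_neg, map_zero, zero_mul]
      rintro ⟨t, ht⟩
      rcases Nat.eq_zero_or_pos m with rfl | hmpos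
      · rw [Nat.zero_div] at ht
        have := pow_pos (show 0 < p by omega) t
        omega
      · apply hm'
        refine ⟨i + t, ?_⟩
        rw [pow_add, ← ht, Nat.mul_div_cancel' hd]
    · rfl

end Main

/-- The Artin–Hasse map `E`, sending a Witt vector `a` over a `ℤ_(p)`-algebra `A` to
`E(a) = ∏ᵢ AH(aᵢ x^{pⁱ})`, is a homomorphism from the additive group `W(A)` to the
multiplicative group `Λ(A) = 1 + x·A[[x]]`: `E(a)` has constant term `1`,
`E(a + b) = E(a)·E(b)`, and moreover `E(V(a)) = E(a) ∘ x^p`.  Here `AH` is the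
Artin–Hasse series `exp(∑ x^{pⁿ}/pⁿ)`, which has coefficients in `ℤ_(p)`. -/
theorem artinHasseExp_hom (p : ℕ) [Fact p.Prime] (A : Type*) [CommRing A]
    [Algebra (ZpRat p) A] (AH : PowerSeries (ZpRat p))
    (hAH : PowerSeries.map (ZpRat p).subtype AH = psComp (PowerSeries.exp ℚ) (ahLog p))
    (a b : WittVector p A) :
    PowerSeries.constantCoeff (R := A) (artinHasseExp AH a) = 1 ∧
    artinHasseExp AH (a + b) = artinHasseExp AH a * artinHasseExp AH b ∧
    artinHasseExp AH (WittVector.verschiebung a) =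
      psComp (artinHasseExp AH a) (PowerSeries.X ^ p) := by
  have hp2 : 1 < p := (Fact.out : p.Prime).one_lt
  classical
  -- Part 1: constant coefficient
  have h1 : PowerSeries.constantCoeff (R := A) (artinHasseExp AH a) = 1 := by
    have hAH0 : coeff (R := (ZpRat p)) 0 AH = 1 := by
      have h := congrArg (coeff (R := ℚ) 0) hAH
      rw [PowerSeries.coeff_map, coeff_zero_psComp, PowerSeries.coeff_exp] at h
      apply Subtype.ext
      simpa using h
    rw [← coeff_zero_eq_constantCoeff_apply]
    simp only [artinHasseExp, coeff_mk]
    rw [zero_add, Finset.prod_range_one, coeff_zero_psComp, PowerSeries.coeff_map, hAH0,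
      map_one]
  -- universal setup
  set A₀ := MvPolynomial (Bool × ℕ) (ZpRat p) with hA₀
  set B₀ := MvPolynomial (Bool × ℕ) ℚ with hB₀
  letI : Algebra (ZpRat p) B₀ := ((algebraMap ℚ B₀).comp (ZpRat p).subtype).toAlgebra
  have halgB : algebraMap (ZpRat p) B₀ = (algebraMap ℚ B₀).comp (ZpRat p).subtype := rfl
  set ι : A₀ →+* B₀ := MvPolynomial.map (ZpRat p).subtype with hι
  have hι_inj : Function.Injective ι :=
    MvPolynomial.map_injective _ (fun x y hxy => Subtype.ext hxy)
  have hι_alg : ι.comp (algebraMap (ZpRat p) A₀) = algebraMap (ZpRat p) B₀ := by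
    apply RingHom.ext
    intro r
    rw [RingHom.comp_apply, MvPolynomial.algebraMap_eq, hι, MvPolynomial.map_C, halgB]
    rw [RingHom.comp_apply, MvPolynomial.algebraMap_eq]
  have hPS_inj := AH_ps_map_injective (R := A₀) hι_inj
  set a₀ : WittVector p A₀ := WittVector.mk p (fun i => MvPolynomial.X (true, i)) with ha₀
  set b₀ : WittVector p A₀ := WittVector.mk p (fun i => MvPolynomial.X (false, i)) with hb₀
  set f : A₀ →+* A :=
    ((MvPolynomial.aeval (fun s : Bool × ℕ => if s.1 then a.coeff s.2 else b.coeff s.2) :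
      A₀ →ₐ[ZpRat p] A) : A₀ →+* A) with hfdef
  have hf_alg : f.comp (algebraMap (ZpRat p) A₀) = algebraMap (ZpRat p) A :=
    AlgHom.comp_algebraMap _
  have hfa : WittVector.map f a₀ = a := by
    ext n
    rw [WittVector.map_coeff]
    simp only [ha₀, hfdef, WittVector.coeff_mk, AlgHom.coe_toRingHom]
    rw [MvPolynomial.aeval_X]
    norm_num
  have hfb : WittVector.map f b₀ = b := by
    ext n
    rw [WittVector.map_coeff]
    simp only [hb₀, hfdef, WittVector.coeff_mk, AlgHom.coe_toRingHom]
    rw [MvPolynomial.aeval_X]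
    norm_num
  refine ⟨h1, ?_, ?_⟩
  · -- additivity
    have keyB : ∀ x y : WittVector p B₀,
        artinHasseExp AH (x + y) = artinHasseExp AH x * artinHasseExp AH y := by
      intro x y
      rw [AHE_eq_exp halgB hAH, AHE_eq_exp halgB hAH, AHE_eq_exp halgB hAH, ghS_add,
        psComp_exp_add (constantCoeff_ghS x) (constantCoeff_ghS y)]
    have keyA₀ : artinHasseExp AH (a₀ + b₀) = artinHasseExp AH a₀ * artinHasseExp AH b₀ := by
      apply hPS_inj
      rw [map_mul, AHE_map AH ι hι_alg, AHE_map AH ι hι_alg, AHE_map AH ι hι_alg, map_add]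
      exact keyB _ _
    calc artinHasseExp AH (a + b)
        = artinHasseExp AH (WittVector.map f (a₀ + b₀)) := by rw [map_add, hfa, hfb]
      _ = PowerSeries.map f (artinHasseExp AH (a₀ + b₀)) := (AHE_map AH f hf_alg _).symm
      _ = PowerSeries.map f (artinHasseExp AH a₀ * artinHasseExp AH b₀) := by rw [keyA₀]
      _ = artinHasseExp AH a * artinHasseExp AH b := by
          rw [map_mul, AHE_map AH f hf_alg, AHE_map AH f hf_alg, hfa, hfb]
  · -- Verschiebung
    have keyB : ∀ x : WittVector p B₀,
        artinHasseExp AH (WittVector.verschiebung x)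
          = psComp (artinHasseExp AH x) (X ^ p) := by
      intro x
      rw [AHE_eq_exp halgB hAH, AHE_eq_exp halgB hAH,
        show (X : PowerSeries B₀) ^ p = C (R := B₀) 1 * X ^ p by rw [map_one, one_mul],
        psComp_assoc_monomial (constantCoeff_ghS x) (by omega) 1 (PowerSeries.exp B₀),
        ← ghS_verschiebung]
    have keyA₀ : artinHasseExp AH (WittVector.verschiebung a₀)
        = psComp (artinHasseExp AH a₀) (X ^ p) := by
      apply hPS_inj
      rw [AHE_map AH ι hι_alg, WittVector.map_verschiebung, AH_map_psComp, map_pow,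
        PowerSeries.map_X, AHE_map AH ι hι_alg]
      exact keyB _
    calc artinHasseExp AH (WittVector.verschiebung a)
        = artinHasseExp AH (WittVector.map f (WittVector.verschiebung a₀)) := by
          rw [WittVector.map_verschiebung, hfa]
      _ = PowerSeries.map f (artinHasseExp AH (WittVector.verschiebung a₀)) :=
          (AHE_map AH f hf_alg _).symm
      _ = PowerSeries.map f (psComp (artinHasseExp AH a₀) (X ^ p)) := by rw [keyA₀]
      _ = psComp (artinHasseExp AH a) (X ^ p) := by
          rw [AH_map_psComp, map_pow, PowerSeries.map_X, AHE_map AH f hf_alg, hfa]
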